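/- Let p > 1, q > 1, r ≥ 1 be natural numbers and let α be a finite set of cardinality n = p·q·r. Let Q = {Q₁, …, Q_r} be a partition of α into r blocks each of cardinality p·q, and let P be a partition of α into q·r blocks each of cardinality p such that every block of P is contained in some block of Q. Let G₀ = {g ∈ Perm α : g(Qᵢ) = Qᵢ for all i} (so G₀ ≅ ∏ᵢ Sym(Qᵢ)), and let H₀ = {h ∈ G₀ : h maps every block of P to a block of P}. Suppose g ∈ G₀ is written as a product g = g₁ ⋯ g_r of permutations with supp(gᵢ) ⊆ Qᵢ for each i, and that gᵢ ∉ H₀ for every i. Then the subgroup generated by H₀ and g equals G₀; equivalently, ⟨H₀, g₁, …, g_r⟩ = G₀. -/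

import Mathlib

open Equiv

section Helpers

variable {β : Type*}

lemma myInvImageEq (f : Equiv.Perm β) (S : Set β) (hinv : ∀ x, f (f x) = x)
    (hmaps : ∀ x ∈ S, f x ∈ S) : f '' S = S := by
  apply Set.Subset.antisymm
  · rintro _ ⟨x, hx, rfl⟩; exact hmaps x hx
  · intro x hx; exact ⟨f x, hmaps x hx, hinv x⟩

lemma myFixImageEq (f : Equiv.Perm β) (S : Set β) (hfix : ∀ x ∈ S, f x = x) :
    f '' S = S := by
  apply Set.Subset.antisymm
  · rintro _ ⟨x, hx, rfl⟩; rwa [hfix x hx]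
  · intro x hx; exact ⟨x, hx, hfix x hx⟩

lemma mySuppImageEq (f : Equiv.Perm β) (S : Set β) (h : ∀ x, f x ≠ x → x ∈ S) :
    f '' S = S := by
  apply Set.Subset.antisymm
  · rintro _ ⟨x, hx, rfl⟩
    by_cases hfx : f x = x
    · rwa [hfx]
    · by_contra hfxS
      have : f (f x) = f x := by
        by_contra hne
        exact hfxS (h _ hne)
      exact hfx (f.injective this)
  · intro y hy
    by_cases hy' : f⁻¹ y = y
    · have h2 := congrArg f hy'
      rw [show f (f⁻¹ y) = y from f.apply_symm_apply y] at h2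
      exact ⟨y, hy, h2.symm⟩
    · have : f (f⁻¹ y) ≠ f⁻¹ y := by
        rw [show f (f⁻¹ y) = y from f.apply_symm_apply y]; exact fun h2 => hy' h2.symm
      exact ⟨f⁻¹ y, h _ this, f.apply_symm_apply y⟩

lemma mySwapImageEq [DecidableEq β] (a b : β) (S : Set β)
    (h : (a ∈ S ∧ b ∈ S) ∨ (a ∉ S ∧ b ∉ S)) : Equiv.swap a b '' S = S := by
  rcases h with ⟨ha, hb⟩ | ⟨ha, hb⟩
  · apply myInvImageEq
    · intro x; rw [Equiv.swap_apply_self]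
    · intro x hx
      rcases eq_or_ne x a with rfl | hxa
      · rwa [Equiv.swap_apply_left]
      rcases eq_or_ne x b with rfl | hxb
      · rwa [Equiv.swap_apply_right]
      · rwa [Equiv.swap_apply_of_ne_of_ne hxa hxb]
  · apply myFixImageEq
    intro x hx
    exact Equiv.swap_apply_of_ne_of_ne (fun h' => ha (h' ▸ hx)) (fun h' => hb (h' ▸ hx))

lemma myListProdFix (l : List (Equiv.Perm β)) (x : β) (h : ∀ σ ∈ l, σ x = x) :
    l.prod x = x := by
  induction l with
  | nil => rfl
  | cons a t ih =>
      rw [List.prod_cons, Equiv.Perm.mul_apply,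
        ih (fun σ hσ => h σ (List.mem_cons_of_mem _ hσ)), h a (List.mem_cons_self (a := a) (l := t))]

lemma myBlockSwapExists [DecidableEq β] (B₁ B₂ : Set β) (hB₁ : B₁.Finite) (hB₂ : B₂.Finite)
    (hd : Disjoint B₁ B₂) (hc : B₁.ncard = B₂.ncard) :
    ∃ h : Equiv.Perm β, (∀ x, h (h x) = x) ∧ (∀ x ∈ B₁, h x ∈ B₂) ∧ (∀ x ∈ B₂, h x ∈ B₁) ∧
      (∀ x, x ∉ B₁ → x ∉ B₂ → h x = x) := by
  classical
  haveI := hB₁.fintype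
  haveI := hB₂.fintype
  have h1 : Fintype.card B₁ = Fintype.card B₂ := by
    rw [← Nat.card_eq_fintype_card, ← Nat.card_eq_fintype_card,
      Nat.card_coe_set_eq, Nat.card_coe_set_eq, hc]
  obtain ⟨e⟩ : Nonempty (B₁ ≃ B₂) := ⟨Fintype.equivOfCardEq h1⟩
  have hne : ∀ x ∈ B₁, x ∉ B₂ := fun x hx => Set.disjoint_left.mp hd hx
  set k : β → β := fun x =>
    if hx : x ∈ B₁ then (e ⟨x, hx⟩ : β)
    else if hx' : x ∈ B₂ then (e.symm ⟨x, hx'⟩ : β) else x with hk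
  have hinv : Function.Involutive k := by
    intro x
    by_cases hx : x ∈ B₁
    · have h2 : (e ⟨x, hx⟩ : β) ∈ B₂ := (e ⟨x, hx⟩).2
      have h3 : (e ⟨x, hx⟩ : β) ∉ B₁ := fun hmem => hne _ hmem h2
      simp only [hk, dif_pos hx, dif_neg h3, dif_pos h2]
      rw [show (⟨(e ⟨x, hx⟩ : β), h2⟩ : B₂) = e ⟨x, hx⟩ from Subtype.ext rfl,
        Equiv.symm_apply_apply]
    · by_cases hx' : x ∈ B₂
      · have h2 : (e.symm ⟨x, hx'⟩ : β) ∈ B₁ := (e.symm ⟨x, hx'⟩).2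
        simp only [hk, dif_neg hx, dif_pos hx', dif_pos h2]
        rw [show (⟨(e.symm ⟨x, hx'⟩ : β), h2⟩ : B₁) = e.symm ⟨x, hx'⟩ from Subtype.ext rfl,
          Equiv.apply_symm_apply]
      · simp only [hk, dif_neg hx, dif_neg hx']
  refine ⟨hinv.toPerm k, ?_, ?_, ?_, ?_⟩
  · intro x; exact hinv x
  · intro x hx
    show k x ∈ B₂
    simp only [hk, dif_pos hx]
    exact (e ⟨x, hx⟩).2
  · intro x hx
    have hx1 : x ∉ B₁ := fun hmem => hne _ hmem hx
    show k x ∈ B₁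
    simp only [hk, dif_neg hx1, dif_pos hx]
    exact (e.symm ⟨x, hx⟩).2
  · intro x hx1 hx2
    show k x = x
    simp only [hk, dif_neg hx1, dif_neg hx2]

lemma myMemOfSwaps [Fintype β] [DecidableEq β] (K G : Subgroup (Equiv.Perm β))
    (hswap : ∀ σ ∈ G, ∀ x : β, σ x ≠ x →
      Equiv.swap x (σ x) ∈ K ∧ Equiv.swap x (σ x) ∈ G) :
    ∀ σ ∈ G, σ ∈ K := by
  suffices H : ∀ n (σ : Equiv.Perm β), σ.support.card = n → σ ∈ G → σ ∈ K by
    intro σ hσ; exact H _ σ rfl hσ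
  intro n
  induction n using Nat.strong_induction_on with
  | _ n ih =>
    intro σ hcard hσ
    rcases Finset.eq_empty_or_nonempty σ.support with he | ⟨x, hx⟩
    · have : σ = 1 := Equiv.Perm.support_eq_empty_iff.mp he
      rw [this]; exact K.one_mem
    · have hxm : σ x ≠ x := Equiv.Perm.mem_support.mp hx
      obtain ⟨hk, hg⟩ := hswap σ hσ x hxm
      set τ := Equiv.swap x (σ x) with hτ
      have hσ' : τ * σ ∈ G := G.mul_mem hg hσ
      have hsub : (τ * σ).support ⊆ σ.support.erase x := by
        intro y hy
        have hy' : (τ * σ) y ≠ y := Equiv.Perm.mem_support.mp hy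
        rw [Finset.mem_erase, Equiv.Perm.mem_support]
        constructor
        · rintro rfl
          exact hy' (by rw [Equiv.Perm.mul_apply, hτ, Equiv.swap_apply_right])
        · intro hyfix
          apply hy'
          rw [Equiv.Perm.mul_apply, hyfix, hτ]
          apply Equiv.swap_apply_of_ne_of_ne
          · rintro rfl; exact hxm hyfix
          · rintro rfl; exact hxm (σ.injective hyfix)
      have hlt : (τ * σ).support.card < n :=
        lt_of_le_of_lt (Finset.card_le_card hsub)
          (hcard ▸ Finset.card_erase_lt_of_mem hx)
      have hmem : τ * σ ∈ K := ih _ hlt (τ * σ) rfl hσ'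
      have hid : σ = τ * (τ * σ) := by
        rw [← mul_assoc, hτ, Equiv.swap_mul_self, one_mul]
      rw [hid]
      exact K.mul_mem hk hmem

end Helpers

/-- Lemma 2.23: Let `α` have cardinality `n = p·q·r`, let `Q₁, …, Q_r` be a
partition of `α` into `r` blocks of size `p·q`, and let `P` be a refinement of
it into `q·r` blocks of size `p`.  Let `G₀` be the subgroup of permutations
fixing each block `Qᵢ` setwise and `H₀` the set of elements of `G₀` permuting
the blocks of `P`.  If `g = g₁ ⋯ g_r` with `supp(gᵢ) ⊆ Qᵢ` and `gᵢ ∉ H₀` for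
all `i`, then `⟨H₀, g⟩ = ⟨H₀, g₁, …, g_r⟩ = G₀`. -/
theorem subgroup_closure_eq_blockwise_sym
    (p q r : ℕ) (hp : 1 < p) (hq : 1 < q) (hr : 1 ≤ r)
    (α : Type*) [Fintype α] (hcard : Fintype.card α = p * q * r)
    (Qb : Fin r → Set α)
    (hQdisj : ∀ i j : Fin r, i ≠ j → Disjoint (Qb i) (Qb j))
    (hQcover : (⋃ i, Qb i) = (Set.univ : Set α))
    (hQcard : ∀ i, (Qb i).ncard = p * q)
    (P : Set (Set α))
    (hPne : ∀ B ∈ P, B.Nonempty)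
    (hPdisj : P.PairwiseDisjoint id)
    (hPcover : ⋃₀ P = (Set.univ : Set α))
    (hPcard : ∀ B ∈ P, B.ncard = p)
    (hPnum : P.ncard = q * r)
    (hrefine : ∀ B ∈ P, ∃ i, B ⊆ Qb i)
    (G₀ H₀ : Set (Equiv.Perm α))
    (hG₀ : G₀ = {σ : Equiv.Perm α | ∀ i, (⇑σ) '' Qb i = Qb i})
    (hH₀ : H₀ = {σ : Equiv.Perm α | σ ∈ G₀ ∧ ∀ B ∈ P, (⇑σ) '' B ∈ P})
    (g : Equiv.Perm α) (gs : Fin r → Equiv.Perm α)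
    (hgG₀ : g ∈ G₀)
    (hprod : g = (List.ofFn gs).prod)
    (hsupp : ∀ i, ∀ x : α, gs i x ≠ x → x ∈ Qb i)
    (hnot : ∀ i, gs i ∉ H₀) :
    ((Subgroup.closure (H₀ ∪ {g}) : Subgroup (Equiv.Perm α)) : Set (Equiv.Perm α)) = G₀ ∧
    ((Subgroup.closure (H₀ ∪ Set.range gs) : Subgroup (Equiv.Perm α)) : Set (Equiv.Perm α)) = G₀ := by
  classical
  have hQuniq : ∀ {x : α} {i j : Fin r}, x ∈ Qb i → x ∈ Qb j → i = j := by
    intro x i j hi hj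
    by_contra hne
    exact Set.disjoint_left.mp (hQdisj i j hne) hi hj
  have hQmem : ∀ x : α, ∃ i, x ∈ Qb i := by
    intro x
    have : x ∈ ⋃ i, Qb i := hQcover ▸ Set.mem_univ x
    simpa using this
  have hPmem : ∀ x : α, ∃ B ∈ P, x ∈ B := by
    intro x
    have : x ∈ ⋃₀ P := hPcover ▸ Set.mem_univ x
    simpa using this
  have hPdisj' : ∀ {B C : Set α}, B ∈ P → C ∈ P → B ≠ C → ∀ {x}, x ∈ B → x ∉ C := by
    intro B C hB hC hne x hxB hxC
    exact Set.disjoint_left.mp (hPdisj hB hC hne) hxB hxC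
  have hrefine' : ∀ {B : Set α}, B ∈ P → ∀ {i : Fin r} {x : α}, x ∈ B → x ∈ Qb i →
      B ⊆ Qb i := by
    intro B hB i x hxB hxQ
    obtain ⟨j, hj⟩ := hrefine B hB
    rwa [hQuniq (hj hxB) hxQ] at hj
  have hgsG₀ : ∀ i, gs i ∈ G₀ := by
    intro i
    rw [hG₀]
    intro j
    by_cases hji : j = i
    · subst hji; exact mySuppImageEq _ _ (hsupp j)
    · apply myFixImageEq
      intro x hx
      by_contra hne
      exact Set.disjoint_left.mp (hQdisj i j fun h => hji h.symm) (hsupp i x hne) hx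
  have hagree : ∀ i, ∀ x ∈ Qb i, g x = gs i x := by
    intro i x hx
    have hperm : List.Perm (List.finRange r) (i :: (List.finRange r).erase i) :=
      List.perm_cons_erase (List.mem_finRange i)
    have hnodup : (i :: (List.finRange r).erase i).Nodup := hperm.nodup (List.nodup_finRange r)
    have hnotmem : i ∉ (List.finRange r).erase i := (List.nodup_cons.mp hnodup).1
    have hcomm : ((List.finRange r).map gs).Pairwise Commute := by
      rw [List.pairwise_map]
      refine List.Pairwise.imp ?_ (List.nodup_finRange r)
      intro a b hab
      apply Equiv.Perm.Disjoint.commute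
      intro y
      by_contra hy
      push_neg at hy
      exact Set.disjoint_left.mp (hQdisj a b hab) (hsupp a y hy.1) (hsupp b y hy.2)
    have hmapperm : List.Perm ((List.finRange r).map gs)
        (gs i :: ((List.finRange r).erase i).map gs) :=
      hperm.map gs
    have hprodeq : g = gs i * (((List.finRange r).erase i).map gs).prod := by
      rw [hprod, List.ofFn_eq_map, hmapperm.prod_eq' hcomm, List.prod_cons]
    have hfix : (((List.finRange r).erase i).map gs).prod x = x := by
      apply myListProdFix
      intro σ hσ
      rw [List.mem_map] at hσ
      obtain ⟨j, hj, rfl⟩ := hσ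
      have hji : j ≠ i := fun h => hnotmem (h ▸ hj)
      by_contra hne
      exact Set.disjoint_left.mp (hQdisj j i hji) (hsupp j x hne) hx
    rw [hprodeq, Equiv.Perm.mul_apply, hfix]
  have hwb : ∀ B ∈ P, ∀ a ∈ B, ∀ b ∈ B, Equiv.swap a b ∈ H₀ := by
    intro B hB a ha b hb
    obtain ⟨j, hjB⟩ := hrefine B hB
    rw [hH₀]
    constructor
    · rw [hG₀]; intro j'
      by_cases hj' : j' = j
      · subst hj'; exact mySwapImageEq _ _ _ (Or.inl ⟨hjB ha, hjB hb⟩)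
      · refine mySwapImageEq _ _ _ (Or.inr ⟨?_, ?_⟩)
        · intro hmem; exact hj' (hQuniq hmem (hjB ha))
        · intro hmem; exact hj' (hQuniq hmem (hjB hb))
    · intro C hC
      by_cases hCB : C = B
      · subst hCB; rw [mySwapImageEq _ _ _ (Or.inl ⟨ha, hb⟩)]; exact hC
      · rw [mySwapImageEq _ _ _ (Or.inr ⟨hPdisj' hB hC (fun h => hCB h.symm) ha,
          hPdisj' hB hC (fun h => hCB h.symm) hb⟩)]
        exact hC
  have hHG : H₀ ⊆ G₀ := by rw [hH₀]; intro σ hσ; exact hσ.1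
  let G' : Subgroup (Equiv.Perm α) :=
    { carrier := G₀
      one_mem' := by
        show (1 : Equiv.Perm α) ∈ G₀
        rw [hG₀]; intro i; simp
      mul_mem' := by
        intro σ τ hσ hτ
        have hσ' : σ ∈ G₀ := hσ
        have hτ' : τ ∈ G₀ := hτ
        show σ * τ ∈ G₀
        rw [hG₀] at hσ' hτ' ⊢
        intro i
        have hco : ⇑(σ * τ) = ⇑σ ∘ ⇑τ := rfl
        rw [hco, Set.image_comp, hτ' i, hσ' i]
      inv_mem' := by
        intro σ hσ
        have hσ' : σ ∈ G₀ := hσ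
        show σ⁻¹ ∈ G₀
        rw [hG₀] at hσ' ⊢
        intro i
        conv_lhs => rw [← hσ' i]
        rw [← Set.image_comp]
        have hco : ⇑σ⁻¹ ∘ ⇑σ = id := funext fun x => σ.symm_apply_apply x
        rw [hco, Set.image_id] }
  have key : ∀ K : Subgroup (Equiv.Perm α), H₀ ⊆ ↑K → g ∈ K → G₀ ⊆ ↑K := by
    intro K hHK hgK
    have conjSwap : ∀ h : Equiv.Perm α, h ∈ K → ∀ x y : α,
        Equiv.swap x y ∈ K → Equiv.swap (h x) (h y) ∈ K := by
      intro h hh x y hxy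
      rw [Equiv.swap_apply_apply]
      exact K.mul_mem (K.mul_mem hh hxy) (K.inv_mem hh)
    have sbK : ∀ C ∈ P, ∀ D ∈ P, C ≠ D → (∃ j, C ⊆ Qb j ∧ D ⊆ Qb j) →
        ∃ h : Equiv.Perm α, h ∈ K ∧ (∀ x ∈ C, h x ∈ D) ∧ (∀ x ∈ D, h x ∈ C) ∧
          (∀ x, x ∉ C → x ∉ D → h x = x) := by
      rintro C hC D hD hCD ⟨j, hCQ, hDQ⟩
      obtain ⟨h, hinv, h1, h2, h3⟩ := myBlockSwapExists C D (Set.toFinite C) (Set.toFinite D)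
        (hPdisj hC hD hCD) (by rw [hPcard C hC, hPcard D hD])
      refine ⟨h, hHK ?_, h1, h2, h3⟩
      rw [hH₀]
      constructor
      · rw [hG₀]; intro j'
        by_cases hjj : j' = j
        · subst hjj
          apply myInvImageEq _ _ hinv
          intro x hx
          by_cases hxC : x ∈ C
          · exact hDQ (h1 x hxC)
          by_cases hxD : x ∈ D
          · exact hCQ (h2 x hxD)
          · rwa [h3 x hxC hxD]
        · apply myFixImageEq
          intro x hx
          apply h3
          · intro hxC; exact hjj (hQuniq hx (hCQ hxC))
          · intro hxD; exact hjj (hQuniq hx (hDQ hxD))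
      · intro B hB
        by_cases hBC : B = C
        · subst hBC
          have himg : h '' B = D := Set.Subset.antisymm
            (by rintro _ ⟨x, hx, rfl⟩; exact h1 x hx)
            (fun y hy => ⟨h y, h2 y hy, hinv y⟩)
          rw [himg]; exact hD
        by_cases hBD : B = D
        · subst hBD
          have himg : h '' B = C := Set.Subset.antisymm
            (by rintro _ ⟨x, hx, rfl⟩; exact h2 x hx)
            (fun y hy => ⟨h y, h1 y hy, hinv y⟩)
          rw [himg]; exact hC
        · rw [myFixImageEq _ _ (fun x hx => h3 x (fun hc => hPdisj' hB hC hBC hx hc)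
            (fun hd => hPdisj' hB hD hBD hx hd))]
          exact hB
    have crossEdge : ∀ i : Fin r, ∃ U ∈ P, ∃ V ∈ P, U ⊆ Qb i ∧ V ⊆ Qb i ∧ U ≠ V ∧
        ∃ u ∈ U, ∃ v ∈ V, Equiv.swap u v ∈ K := by
      intro i
      have hbad : ∃ B ∈ P, ¬(⇑(gs i)) '' B ∈ P := by
        by_contra hcon
        push_neg at hcon
        exact hnot i (by rw [hH₀]; exact ⟨hgsG₀ i, hcon⟩)
      obtain ⟨B, hB, hBim⟩ := hbad
      obtain ⟨j, hBQ⟩ := hrefine B hB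
      have hji : j = i := by
        by_contra hne
        apply hBim
        have hfixB : (⇑(gs i)) '' B = B := by
          apply myFixImageEq
          intro x hx
          by_contra hmx
          exact Set.disjoint_left.mp (hQdisj i j fun h => hne h.symm)
            (hsupp i x hmx) (hBQ hx)
        rw [hfixB]; exact hB
      have hBQi : B ⊆ Qb i := hji ▸ hBQ
      have himeq : ⇑g '' B = ⇑(gs i) '' B :=
        Set.image_congr fun x hx => hagree i x (hBQi hx)
      obtain ⟨a, haB⟩ := hPne B hB
      obtain ⟨C, hC, haC⟩ := hPmem (g a)
      have hgQ : ∀ y ∈ Qb i, g y ∈ Qb i := by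
        intro y hy
        have hg' := hgG₀
        rw [hG₀] at hg'
        rw [← hg' i]
        exact ⟨y, hy, rfl⟩
      have hgaQ : g a ∈ Qb i := hgQ a (hBQi haB)
      have hCQ : C ⊆ Qb i := hrefine' hC haC hgaQ
      have hex : ∃ b ∈ B, g b ∉ C := by
        by_contra hcon
        push_neg at hcon
        apply hBim
        rw [← himeq]
        have hsub : ⇑g '' B ⊆ C := by rintro _ ⟨x, hx, rfl⟩; exact hcon x hx
        have heq : ⇑g '' B = C := Set.eq_of_subset_of_ncard_le hsub
          (by rw [Set.ncard_image_of_injective B g.injective, hPcard B hB, hPcard C hC])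
          (Set.toFinite C)
        rw [heq]; exact hC
      obtain ⟨b, hbB, hgbC⟩ := hex
      obtain ⟨D, hD, hgbD⟩ := hPmem (g b)
      have hgbQ : g b ∈ Qb i := hgQ b (hBQi hbB)
      have hDQ : D ⊆ Qb i := hrefine' hD hgbD hgbQ
      have hCD : C ≠ D := fun h => hgbC (h ▸ hgbD)
      have hswapK : Equiv.swap a b ∈ K := hHK (hwb B hB a haB b hbB)
      exact ⟨C, hC, D, hD, hCQ, hDQ, hCD, g a, haC, g b, hgbD, conjSwap g hgK a b hswapK⟩
    have allSwaps : ∀ i : Fin r, ∀ a ∈ Qb i, ∀ b ∈ Qb i, Equiv.swap a b ∈ K := by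
      intro i a haQ b hbQ
      rcases eq_or_ne a b with rfl | hab
      · rw [show Equiv.swap a a = 1 from Equiv.swap_self a]; exact K.one_mem
      obtain ⟨U, hU, V, hV, hUQ, hVQ, hUV, u, huU, v, hvV, huv⟩ := crossEdge i
      have edge : ∀ C ∈ P, ∀ D ∈ P, C ⊆ Qb i → D ⊆ Qb i → C ≠ D →
          ∃ c ∈ C, ∃ d ∈ D, Equiv.swap c d ∈ K := by
        intro C hC D hD hCQ hDQ hCD
        have stepA : ∃ X ∈ P, X ⊆ Qb i ∧ X ≠ C ∧ ∃ c ∈ C, ∃ x ∈ X,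
            Equiv.swap c x ∈ K := by
          by_cases h1 : C = U
          · subst h1
            exact ⟨V, hV, hVQ, fun h => hUV h.symm, u, huU, v, hvV, huv⟩
          by_cases h2 : C = V
          · subst h2
            exact ⟨U, hU, hUQ, hUV, v, hvV, u, huU, by rw [Equiv.swap_comm]; exact huv⟩
          · obtain ⟨h, hhK, hm1, hm2, hfix⟩ := sbK U hU C hC (fun e => h1 e.symm)
              ⟨i, hUQ, hCQ⟩
            have hv1 : h v = v := hfix v (fun hm => hPdisj' hV hU hUV.symm hvV hm)
              (fun hm => hPdisj' hV hC (Ne.symm h2) hvV hm)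
            have hcC : h u ∈ C := hm1 u huU
            have hconj := conjSwap h hhK u v huv
            rw [hv1] at hconj
            exact ⟨V, hV, hVQ, Ne.symm h2, h u, hcC, v, hvV, hconj⟩
        obtain ⟨X, hX, hXQ, hXC, c, hcC, x, hxX, hcx⟩ := stepA
        by_cases hXD : X = D
        · subst hXD; exact ⟨c, hcC, x, hxX, hcx⟩
        · obtain ⟨h, hhK, hm1, hm2, hfix⟩ := sbK X hX D hD hXD ⟨i, hXQ, hDQ⟩
          have hc1 : h c = c := hfix c (fun hm => hPdisj' hC hX (Ne.symm hXC) hcC hm)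
            (fun hm => hPdisj' hC hD hCD hcC hm)
          have hxD : h x ∈ D := hm1 x hxX
          have hconj := conjSwap h hhK c x hcx
          rw [hc1] at hconj
          exact ⟨c, hcC, h x, hxD, hconj⟩
      obtain ⟨Ca, hCa, haCa⟩ := hPmem a
      obtain ⟨Cb, hCb, hbCb⟩ := hPmem b
      have hCaQ : Ca ⊆ Qb i := hrefine' hCa haCa haQ
      have hCbQ : Cb ⊆ Qb i := hrefine' hCb hbCb hbQ
      by_cases hsame : Ca = Cb
      · exact hHK (hwb Ca hCa a haCa b (by rw [hsame]; exact hbCb))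
      · obtain ⟨c, hcC, d, hdD, hcd⟩ := edge Ca hCa Cb hCb hCaQ hCbQ hsame
        have hdnotCa : d ∉ Ca := hPdisj' hCb hCa (Ne.symm hsame) hdD
        have step1 : Equiv.swap a d ∈ K := by
          rcases eq_or_ne a c with rfl | hac
          · exact hcd
          · have ht : Equiv.swap a c ∈ K := hHK (hwb Ca hCa a haCa c hcC)
            have hconj := conjSwap _ ht c d hcd
            have hd1 : (Equiv.swap a c) d = d := Equiv.swap_apply_of_ne_of_ne
              (fun e => hdnotCa (by rw [e]; exact haCa))
              (fun e => hdnotCa (by rw [e]; exact hcC))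
            rw [Equiv.swap_apply_right, hd1] at hconj
            exact hconj
        rcases eq_or_ne b d with rfl | hbd
        · exact step1
        · have ht : Equiv.swap b d ∈ K := hHK (hwb Cb hCb b hbCb d hdD)
          have hconj := conjSwap _ ht a d step1
          have hanotCb : a ∉ Cb := hPdisj' hCa hCb hsame haCa
          have ha1 : (Equiv.swap b d) a = a := Equiv.swap_apply_of_ne_of_ne
            (fun e => hanotCb (by rw [e]; exact hbCb))
            (fun e => hanotCb (by rw [e]; exact hdD))
          rw [ha1, Equiv.swap_apply_right] at hconj
          exact hconj
    intro σ hσ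
    refine myMemOfSwaps K G' ?_ σ hσ
    intro τ hτ x hx
    obtain ⟨i, hxQ⟩ := hQmem x
    have hτG : τ ∈ G₀ := hτ
    rw [hG₀] at hτG
    have hτxQ : τ x ∈ Qb i := by rw [← hτG i]; exact ⟨x, hxQ, rfl⟩
    constructor
    · exact allSwaps i x hxQ (τ x) hτxQ
    · show Equiv.swap x (τ x) ∈ G₀
      rw [hG₀]; intro j
      by_cases hji : j = i
      · subst hji; exact mySwapImageEq _ _ _ (Or.inl ⟨hxQ, hτxQ⟩)
      · exact mySwapImageEq _ _ _ (Or.inr ⟨fun hm => hji (hQuniq hm hxQ),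
          fun hm => hji (hQuniq hm hτxQ)⟩)
  constructor
  · apply Set.Subset.antisymm
    · have hle : Subgroup.closure (H₀ ∪ {g}) ≤ G' := by
        rw [Subgroup.closure_le]
        rintro σ (hσ | hσ)
        · exact hHG hσ
        · rw [Set.mem_singleton_iff] at hσ; subst hσ; exact hgG₀
      intro x hx; exact hle hx
    · exact key _ (fun σ hσ => Subgroup.subset_closure (Or.inl hσ))
        (Subgroup.subset_closure (Or.inr rfl))
  · apply Set.Subset.antisymm
    · have hle : Subgroup.closure (H₀ ∪ Set.range gs) ≤ G' := by
        rw [Subgroup.closure_le]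
        rintro σ (hσ | ⟨j, rfl⟩)
        · exact hHG hσ
        · exact hgsG₀ j
      intro x hx; exact hle hx
    · apply key
      · exact fun σ hσ => Subgroup.subset_closure (Or.inl hσ)
      · rw [hprod]
        apply Subgroup.list_prod_mem
        intro σ hσ
        rw [List.mem_ofFn] at hσ
        obtain ⟨j, rfl⟩ := hσ
        exact Subgroup.subset_closure (Or.inr ⟨j, rfl⟩)
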